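/- Let û_i = β̂_i·x_i + w_i for arms i in group P_2 and û_i = β̂_i·x_i + w_i − ψ̂_1·x_i + b_{1,i} + ψ̂_2·x_i + b_{2,i} for arms i in group P_1. Assume |β̂_i·x_i − (β_i·x_i + 1[i∈P_1] ψ·x_i)| ≤ w_i for all i, |ψ̂_1·x_i − ψ̄_1·x_i| ≤ b_{1,i}, |ψ̂_2·x_i − ψ̄_2·x_i| ≤ b_{2,i}, and ψ̄_1·x_i − ψ̄_2·x_i = ψ·x_i for the biased group. Then for every arm i, β_i·x_i ≤ û_i ≤ β_i·x_i + 2(w_i + b_{1,i} + b_{2,i}), so the true unbiased reward of the arm a = argmax û satisfies f(x_{i*}) − f(x_a) ≤ 2(w_a + b_{1,a} + b_{2,a}) + 2(w_{i*} + b_{1,i*} + b_{2,i*}). -/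

import Mathlib

theorem stmt17 (n d : ℕ) (P1 : Finset (Fin n))
    (β βhat : Fin n → Fin d → ℝ) (x : Fin n → Fin d → ℝ)
    (ψ ψb1 ψb2 ψhat1 ψhat2 : Fin d → ℝ)
    (w b1 b2 uhat : Fin n → ℝ)
    (hw0 : ∀ i, 0 ≤ w i) (hb10 : ∀ i, 0 ≤ b1 i) (hb20 : ∀ i, 0 ≤ b2 i)
    (huhat1 : ∀ i ∈ P1, uhat i = dotProduct (βhat i) (x i) + w i
      - dotProduct ψhat1 (x i) + b1 i + dotProduct ψhat2 (x i) + b2 i)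
    (huhat2 : ∀ i ∉ P1, uhat i = dotProduct (βhat i) (x i) + w i)
    (hβ : ∀ i, |dotProduct (βhat i) (x i) -
      (dotProduct (β i) (x i) +
        (if i ∈ P1 then dotProduct ψ (x i) else 0))| ≤ w i)
    (hψ1 : ∀ i, |dotProduct ψhat1 (x i) - dotProduct ψb1 (x i)| ≤ b1 i)
    (hψ2 : ∀ i, |dotProduct ψhat2 (x i) - dotProduct ψb2 (x i)| ≤ b2 i)
    (hbias : ∀ i ∈ P1, dotProduct ψb1 (x i) - dotProduct ψb2 (x i)
      = dotProduct ψ (x i))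
    (istar a : Fin n)
    (histar : ∀ i, dotProduct (β i) (x i) ≤ dotProduct (β istar) (x istar))
    (ha : ∀ i, uhat i ≤ uhat a) :
    (∀ i, dotProduct (β i) (x i) ≤ uhat i ∧
      uhat i ≤ dotProduct (β i) (x i) + 2 * (w i + b1 i + b2 i)) ∧
    dotProduct (β istar) (x istar) - dotProduct (β a) (x a) ≤
      2 * (w a + b1 a + b2 a) + 2 * (w istar + b1 istar + b2 istar) := by

  have key : ∀ i, dotProduct (β i) (x i) ≤ uhat i ∧
      uhat i ≤ dotProduct (β i) (x i) + 2 * (w i + b1 i + b2 i) := by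
    intro i
    rcases abs_le.mp (hβ i) with ⟨hβl, hβu⟩
    rcases abs_le.mp (hψ1 i) with ⟨h1l, h1u⟩
    rcases abs_le.mp (hψ2 i) with ⟨h2l, h2u⟩
    by_cases hi : i ∈ P1
    · rw [huhat1 i hi]
      have hb := hbias i hi
      simp only [if_pos hi] at hβl hβu
      constructor <;> linarith
    · rw [huhat2 i hi]
      simp only [if_neg hi] at hβl hβu
      have := hb10 i
      have := hb20 i
      constructor <;> linarith
  refine ⟨key, ?_⟩
  have h1 := (key istar).1
  have h2 := (key a).2
  have h3 := ha istar
  have := hw0 istar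
  have := hb10 istar
  have := hb20 istar
  linarith
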